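/- Let L be a lattice of signature (2,n) and let E ⊂ L be a primitive sublattice of rank 2 that is totally isotropic, i.e. (x,y) = 0 for all x,y ∈ E; set E^⊥ = {x ∈ L : (x,y) = 0 for all y ∈ E}. Then there exist a ℤ-basis e'_1,…,e'_{n+2} of L and positive integers δ and e such that: e'_1, e'_2 is a ℤ-basis of E; e'_1,…,e'_n is a ℤ-basis of E^⊥; and the Gram matrix ((e'_i,e'_j)), with indices grouped as {1,2}, {3,…,n}, {n+1,n+2}, has block form [[0,0,A],[0,B,C],[Aᵀ,Cᵀ,D]] with A = diag(δ, δe). -/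

import Mathlib

namespace A0607339

/-- The `ℤ`-valued bilinear form attached to a Gram matrix `G`. -/
def bZ {ι : Type} [Fintype ι] (G : Matrix ι ι ℤ) (x y : ι → ℤ) : ℤ :=
  dotProduct x (Matrix.mulVec G y)

/-- The Gram matrix `G` has `p` positive and `q` negative squares in a real
diagonalization, i.e. the lattice has signature `(p,q)`. -/
def HasSignature {ι : Type} [Fintype ι] [DecidableEq ι] (G : Matrix ι ι ℤ) (p q : ℕ) : Prop :=
  ∃ (P : Matrix ι ι ℝ) (d : ι → ℝ), IsUnit P.det ∧
    Matrix.transpose P * G.map (Int.cast : ℤ → ℝ) * P = Matrix.diagonal d ∧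
    Nat.card {i // 0 < d i} = p ∧ Nat.card {i // d i < 0} = q

open Submodule



/-- Bundled bilinear form. -/
noncomputable def BL {ι : Type} [Fintype ι] (G : Matrix ι ι ℤ) :
    (ι → ℤ) →ₗ[ℤ] (ι → ℤ) →ₗ[ℤ] ℤ :=
  LinearMap.mk₂ ℤ (bZ G)
    (fun x x' y => by simp [bZ, add_dotProduct])
    (fun c x y => by simp [bZ]; rw [show (c : ι → ℤ) * x = c • x from rfl, smul_dotProduct]; rfl)
    (fun x y y' => by simp [bZ, Matrix.mulVec_add, dotProduct_add])
    (fun c x y => by simp [bZ]; rw [show (c : ι → ℤ) * y = c • y from rfl, Matrix.mulVec_smul, dotProduct_smul]; rfl)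

@[simp] lemma BL_apply {ι : Type} [Fintype ι] (G : Matrix ι ι ℤ) (x y : ι → ℤ) :
    BL G x y = bZ G x y := rfl

lemma bZ_comm {ι : Type} [Fintype ι] {G : Matrix ι ι ℤ} (hsym : G.IsSymm)
    (x y : ι → ℤ) : bZ G x y = bZ G y x := by
  unfold bZ
  rw [Matrix.dotProduct_mulVec, ← Matrix.mulVec_transpose, hsym.eq, dotProduct_comm]


lemma bZ_add_right {ι : Type} [Fintype ι] (G : Matrix ι ι ℤ) (x y z : ι → ℤ) :
    bZ G x (y + z) = bZ G x y + bZ G x z := by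
  simp [bZ, Matrix.mulVec_add, dotProduct_add]

lemma bZ_smul_right {ι : Type} [Fintype ι] (G : Matrix ι ι ℤ) (c : ℤ) (x y : ι → ℤ) :
    bZ G x (c • y) = c * bZ G x y := by
  simp only [bZ, Matrix.mulVec_smul, dotProduct_smul, smul_eq_mul]

lemma bZ_add_left {ι : Type} [Fintype ι] (G : Matrix ι ι ℤ) (x y z : ι → ℤ) :
    bZ G (x + y) z = bZ G x z + bZ G y z := by
  simp [bZ, add_dotProduct]

lemma bZ_smul_left {ι : Type} [Fintype ι] (G : Matrix ι ι ℤ) (c : ℤ) (x y : ι → ℤ) :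
    bZ G (c • x) y = c * bZ G x y := by
  simp only [bZ, smul_dotProduct, smul_eq_mul]

/-- Stacking a family spanning the kernel of `φ` with a family whose image under `φ`
is independent and spans the image gives a basis. -/
lemma stack {M M₂ : Type*} [AddCommGroup M] [Module ℤ M] [AddCommGroup M₂] [Module ℤ M₂]
    (φ : M →ₗ[ℤ] M₂) {ι κ : Type*} (v : ι → M) (w : κ → M)
    (hv : LinearIndependent ℤ v) (hvs : span ℤ (Set.range v) = LinearMap.ker φ)
    (hw : LinearIndependent ℤ (⇑φ ∘ w))
    (hws : ∀ x, φ x ∈ span ℤ (Set.range (⇑φ ∘ w))) :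
    LinearIndependent ℤ (Sum.elim v w) ∧ span ℤ (Set.range (Sum.elim v w)) = ⊤ := by
  have hker : ∀ z ∈ span ℤ (Set.range w), φ z = 0 → z = 0 := by
    intro z hz hz0
    rw [Finsupp.mem_span_range_iff_exists_finsupp] at hz
    obtain ⟨c, rfl⟩ := hz
    rw [map_finsuppSum] at hz0
    simp only [LinearMap.map_smul] at hz0
    have := linearIndependent_iff.mp hw c ?_
    · simp [this]
    · rw [Finsupp.linearCombination_apply, Finsupp.sum]
      rw [Finsupp.sum] at hz0
      simpa [map_smul] using hz0
  constructor
  · refine LinearIndependent.sum_type hv (hw.of_comp φ) ?_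
    rw [Submodule.disjoint_def, hvs]
    intro z hz1 hz2
    exact hker z hz2 hz1
  · rw [eq_top_iff]
    intro x _
    have h1 : φ x ∈ Submodule.map φ (span ℤ (Set.range w)) := by
      rw [← Submodule.span_image, ← Set.range_comp]; exact hws x
    obtain ⟨y, hy, hxy⟩ := h1
    have hxmy : x - y ∈ span ℤ (Set.range v) := by
      rw [hvs]; simp [LinearMap.mem_ker, map_sub, hxy]
    have hxe : x = (x - y) + y := by abel
    rw [hxe, Set.Sum.elim_range]
    exact add_mem
      (span_mono Set.subset_union_left hxmy)
      (span_mono Set.subset_union_right hy)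



/-- cast of bZ to ℚ. -/
lemma bZ_cast {N : ℕ} (G : Matrix (Fin N) (Fin N) ℤ) (x y : Fin N → ℤ) :
    ((bZ G x y : ℤ) : ℚ) =
      dotProduct (fun i => ((x i : ℤ) : ℚ))
        (Matrix.mulVec (G.map (Int.cast : ℤ → ℚ)) (fun i => ((y i : ℤ) : ℚ))) := by
  simp only [bZ, dotProduct, Matrix.mulVec, Matrix.map_apply]
  push_cast
  ring_nf

/-- ℤ-independence implies ℚ-independence of the casts. -/
lemma pair_indep_rat {N : ℕ} {x y : Fin N → ℤ}
    (h : LinearIndependent ℤ ![x, y]) :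
    LinearIndependent ℚ ![(fun i => ((x i : ℤ) : ℚ)), (fun i => ((y i : ℤ) : ℚ))] := by
  rw [LinearIndependent.pair_iff] at h ⊢
  intro s t hst
  have key : ∀ (i : Fin N), s * (x i : ℚ) + t * (y i : ℚ) = 0 := by
    intro i
    have := congrFun hst i
    simpa using this
  have hz : (s.num * t.den) • x + (t.num * s.den) • y = 0 := by
    funext i
    have h1 := key i
    have : ((s.num * t.den * x i + t.num * s.den * y i : ℤ) : ℚ) = 0 := by
      push_cast
      have hs : (s.num : ℚ) = s * s.den := by
        rw [mul_comm, ← Rat.den_mul_eq_num]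
      have ht : (t.num : ℚ) = t * t.den := by
        rw [mul_comm, ← Rat.den_mul_eq_num]
      rw [hs, ht]
      have : s * ↑s.den * ↑t.den * ↑(x i) + t * ↑t.den * ↑s.den * ↑(y i)
          = (s.den : ℚ) * t.den * (s * x i + t * y i) := by ring
      rw [this, h1, mul_zero]
    exact_mod_cast this
  obtain ⟨h1, h2⟩ := h _ _ hz
  constructor
  · have : s.num = 0 := by
      rcases mul_eq_zero.mp h1 with h | h
      · exact h
      · exact absurd h (by exact_mod_cast t.den_nz)
    exact Rat.zero_iff_num_zero.mpr this
  · have : t.num = 0 := by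
      rcases mul_eq_zero.mp h2 with h | h
      · exact h
      · exact absurd h (by exact_mod_cast s.den_nz)
    exact Rat.zero_iff_num_zero.mpr this

/-- Separation: given a ℤ-independent pair, there is `u` pairing nontrivially with `x`
and trivially with `y`. -/
lemma separate {N : ℕ} (G : Matrix (Fin N) (Fin N) ℤ) (hdet : G.det ≠ 0)
    {x y : Fin N → ℤ} (h : LinearIndependent ℤ ![x, y]) :
    ∃ (u : Fin N → ℤ) (m : ℤ), m ≠ 0 ∧ bZ G u x = m ∧ bZ G u y = 0 := by
  classical
  set Gq : Matrix (Fin N) (Fin N) ℚ := G.map (Int.cast : ℤ → ℚ) with hGq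
  have hdetq : IsUnit Gq.det := by
    rw [isUnit_iff_ne_zero, hGq]
    have hcast : (G.map (Int.cast : ℤ → ℚ)).det = ((G.det : ℤ) : ℚ) := by
      rw [show G.map (Int.cast : ℤ → ℚ) = (Int.castRingHom ℚ).mapMatrix G from rfl,
        ← RingHom.map_det]
      rfl
    rw [hcast]
    exact_mod_cast hdet
  have hGinj : ∀ z : Fin N → ℚ, Gq.mulVec z = 0 → z = 0 := by
    intro z hz
    have : Gq⁻¹.mulVec (Gq.mulVec z) = z := by
      rw [Matrix.mulVec_mulVec, Matrix.nonsing_inv_mul _ hdetq, Matrix.one_mulVec]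
    rw [hz, Matrix.mulVec_zero] at this
    exact this.symm
  set xq : Fin N → ℚ := fun i => ((x i : ℤ) : ℚ)
  set yq : Fin N → ℚ := fun i => ((y i : ℤ) : ℚ)
  set w0 : Fin N → ℚ := Gq.mulVec xq with hw0
  set w1 : Fin N → ℚ := Gq.mulVec yq with hw1
  have hwli : LinearIndependent ℚ ![w0, w1] := by
    rw [LinearIndependent.pair_iff]
    intro s t hst
    have : Gq.mulVec (s • xq + t • yq) = 0 := by
      rw [Matrix.mulVec_add, Matrix.mulVec_smul, Matrix.mulVec_smul, ← hw0, ← hw1, hst]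
    have h0 := hGinj _ this
    exact LinearIndependent.pair_iff.mp (pair_indep_rat h) s t h0
  -- construct functional χ with χ w0 = 1, χ w1 = 0
  have hwli' : LinearIndependent ℚ (fun i : Fin 2 => ![w0, w1] i) := hwli
  let bS : Module.Basis (Fin 2) ℚ ↥(span ℚ (Set.range ![w0, w1])) := Module.Basis.span hwli'
  obtain ⟨χ, hχ⟩ := LinearMap.exists_extend (bS.coord 0)
  have hχ0 : χ w0 = 1 := by
    have h1 : ((bS 0 : ↥(span ℚ (Set.range ![w0, w1]))) : Fin N → ℚ) = w0 := by
      rw [Module.Basis.span_apply]; rfl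
    have := congrArg (fun f => f (bS 0)) hχ
    simp only [LinearMap.comp_apply, Submodule.subtype_apply] at this
    rw [h1] at this
    rw [this, Module.Basis.coord_apply, Module.Basis.repr_self]
    simp
  have hχ1 : χ w1 = 0 := by
    have h1 : ((bS 1 : ↥(span ℚ (Set.range ![w0, w1]))) : Fin N → ℚ) = w1 := by
      rw [Module.Basis.span_apply]; rfl
    have := congrArg (fun f => f (bS 1)) hχ
    simp only [LinearMap.comp_apply, Submodule.subtype_apply] at this
    rw [h1] at this
    rw [this, Module.Basis.coord_apply, Module.Basis.repr_self]
    simp [Finsupp.single_apply]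
  -- represent χ as a dot product
  set r : Fin N → ℚ := fun j => χ (fun i => if j = i then 1 else 0) with hr
  have hrep : ∀ z : Fin N → ℚ, χ z = ∑ j, z j * r j := by
    intro z
    conv_lhs => rw [pi_eq_sum_univ z]
    rw [map_sum]
    refine Finset.sum_congr rfl fun j _ => ?_
    rw [map_smul]
    simp [hr, smul_eq_mul]
  -- clear denominators
  set d : ℤ := ∏ j, ((r j).den : ℤ) with hd
  have hdpos : 0 < d := by
    apply Finset.prod_pos
    intro j _
    exact_mod_cast (r j).den_pos
  set u : Fin N → ℤ := fun j => (r j).num * (d / ((r j).den : ℤ)) with hu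
  have hucast : ∀ j, ((u j : ℤ) : ℚ) = (d : ℚ) * r j := by
    intro j
    have hdvd : ((r j).den : ℤ) ∣ d := Finset.dvd_prod_of_mem _ (Finset.mem_univ j)
    obtain ⟨k, hk⟩ := hdvd
    rw [hu]
    simp only []
    rw [hk, Int.mul_ediv_cancel_left _ (by exact_mod_cast (r j).den_nz)]
    push_cast
    have : ((r j).num : ℚ) = r j * (r j).den := by
      rw [mul_comm, ← Rat.den_mul_eq_num]
    rw [this]; ring
  -- compute pairings
  have hcomp : ∀ z : Fin N → ℤ, ((bZ G u z : ℤ) : ℚ) = d * χ (Gq.mulVec (fun i => ((z i : ℤ) : ℚ))) := by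
    intro z
    rw [bZ_cast]
    rw [hrep]
    rw [dotProduct]
    rw [Finset.mul_sum]
    refine Finset.sum_congr rfl fun j _ => ?_
    rw [hucast j]
    ring
  refine ⟨u, bZ G u x, ?_, rfl, ?_⟩
  · intro h0
    have := hcomp x
    rw [h0] at this
    simp only [Int.cast_zero] at this
    rw [← hw0, hχ0, mul_one] at this
    exact absurd this.symm (by exact_mod_cast hdpos.ne')
  · have := hcomp y
    rw [← hw1, hχ1, mul_zero] at this
    exact_mod_cast this



/-- 2x2 Smith normal form with divisibility, for a submodule of `ℤ²`. -/
lemma snf2 (H : Submodule ℤ (Fin 2 → ℤ)) {h₀ h₁ : Fin 2 → ℤ}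
    (h₀H : h₀ ∈ H) (h₁H : h₁ ∈ H) (hli : LinearIndependent ℤ ![h₀, h₁]) :
    ∃ (φ : Module.Basis (Fin 2) ℤ (Fin 2 → ℤ)) (g l : ℤ), 0 < g ∧ 0 < l ∧ g ∣ l ∧
      H = span ℤ {g • φ 0, l • φ 1} := by
  classical
  have hpair := LinearIndependent.pair_iff.mp hli
  have hW : Module.finrank ℤ (Fin 2 → ℤ) = 2 := by
    rw [Module.finrank_eq_card_basis (Pi.basisFun ℤ (Fin 2))]
    simp
  -- Smith normal form
  obtain ⟨k, snf⟩ := H.smithNormalForm (Pi.basisFun ℤ (Fin 2))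
  have hbNli : LinearIndependent ℤ (⇑H.subtype ∘ ⇑snf.bN) :=
    snf.bN.linearIndependent.map' H.subtype (Submodule.ker_subtype H)
  have hspan : H = span ℤ (Set.range (⇑H.subtype ∘ ⇑snf.bN)) := by
    rw [Set.range_comp, Submodule.span_image, snf.bN.span_eq, Submodule.map_subtype_top]
  have hkle : k ≤ 2 := by
    have := hbNli.fintype_card_le_finrank
    simpa [hW] using this
  have hk : k = 2 := by
    rcases Nat.lt_or_ge k 2 with hlt | hge
    · exfalso
      interval_cases k
      · -- k = 0 : H = ⊥
        have : H = ⊥ := by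
          rw [hspan, Set.range_eq_empty, Submodule.span_empty]
        rw [this, Submodule.mem_bot] at h₀H
        have := (hpair 1 0 (by rw [h₀H]; simp)).1
        norm_num at this
      · -- k = 1 : H ≤ span of one vector
        set z : Fin 2 → ℤ := H.subtype (snf.bN 0) with hz
        have hr : Set.range (⇑H.subtype ∘ ⇑snf.bN) = {z} := by
          ext t
          constructor
          · rintro ⟨i, rfl⟩
            have : i = 0 := Subsingleton.elim _ _
            rw [this]; rfl
          · rintro rfl; exact ⟨0, rfl⟩
        rw [hspan, hr] at h₀H h₁H
        obtain ⟨a, ha⟩ := Submodule.mem_span_singleton.mp h₀H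
        obtain ⟨b, hb⟩ := Submodule.mem_span_singleton.mp h₁H
        have hcomb : b • h₀ + (-a) • h₁ = 0 := by
          rw [← ha, ← hb]; module
        obtain ⟨hb0, ha0⟩ := hpair _ _ hcomb
        have h₁0 : h₁ = 0 := by rw [← hb, hb0, zero_smul]
        have := (hpair 0 1 (by rw [h₁0]; simp)).2
        norm_num at this
    · exact le_antisymm hkle hge
  subst hk
  have hfbij : Function.Bijective snf.f := Finite.injective_iff_bijective.mp snf.f.injective
  set σ : Fin 2 ≃ Fin 2 := Equiv.ofBijective snf.f hfbij with hσ
  set c : Module.Basis (Fin 2) ℤ (Fin 2 → ℤ) := snf.bM.reindex σ.symm with hc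
  have hcf : ∀ i, c i = snf.bM (snf.f i) := by
    intro i
    rw [hc, Module.Basis.reindex_apply, Equiv.symm_symm]
    rfl
  have hsnf : ∀ i, (snf.bN i : Fin 2 → ℤ) = snf.a i • c i := by
    intro i; rw [hcf]; exact snf.snf i
  have hane : ∀ i, snf.a i ≠ 0 := by
    intro i hai
    have h1 := hsnf i
    rw [hai, zero_smul] at h1
    exact (snf.bN.ne_zero i) (by ext; simpa using congrFun h1 _)
  -- H = span of the two diagonal generators
  have hHspan : H = span ℤ {snf.a 0 • c 0, snf.a 1 • c 1} := by
    refine hspan.trans ?_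
    congr 1
    ext t
    simp only [Set.mem_range, Set.mem_insert_iff, Set.mem_singleton_iff]
    constructor
    · rintro ⟨i, rfl⟩
      fin_cases i
      · left; exact hsnf 0
      · right; exact hsnf 1
    · rintro (rfl | rfl)
      · exact ⟨0, hsnf 0⟩
      · exact ⟨1, hsnf 1⟩
  -- make diagonal entries positive
  set ε : Fin 2 → ℤˣ := fun i => if snf.a i < 0 then -1 else 1 with hε
  set w : Module.Basis (Fin 2) ℤ (Fin 2 → ℤ) := c.unitsSMul ε with hwdef
  set D : Fin 2 → ℤ := fun i => (ε i : ℤ) * snf.a i with hD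
  have hDpos : ∀ i, 0 < D i := by
    intro i
    rw [hD]
    by_cases h : snf.a i < 0
    · simp only [hε, if_pos h]
      simpa using (neg_pos.mpr h)
    · simp only [hε, if_neg h]
      simp only [Units.val_one, one_mul]
      exact lt_of_le_of_ne (not_lt.mp h) (Ne.symm (hane i))
  have hDw : ∀ i, D i • w i = snf.a i • c i := by
    intro i
    rw [hwdef, Module.Basis.unitsSMul_apply, Units.smul_def, smul_smul, hD]
    by_cases h : snf.a i < 0 <;> simp [hε, h] <;> module
  have hHspan2' : H = span ℤ {D 0 • w 0, D 1 • w 1} := by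
    rw [hHspan, hDw 0, hDw 1]
  -- make the diagonal entries opaque
  obtain ⟨d₀, d₁, hd₀pos, hd₁pos, hHspan2⟩ :
      ∃ d₀ d₁ : ℤ, 0 < d₀ ∧ 0 < d₁ ∧ H = span ℤ {d₀ • w 0, d₁ • w 1} :=
    ⟨D 0, D 1, hDpos 0, hDpos 1, hHspan2'⟩
  -- Bezout fix-up
  obtain ⟨g, U, V, hgpos, hBez, hgd0, hgd1⟩ :
      ∃ g U V : ℤ, 0 < g ∧ g = d₀ * U + d₁ * V ∧ g ∣ d₀ ∧ g ∣ d₁ := by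
    refine ⟨(Int.gcd d₀ d₁ : ℤ), Int.gcdA d₀ d₁, Int.gcdB d₀ d₁, ?_,
      Int.gcd_eq_gcd_ab d₀ d₁, Int.gcd_dvd_left d₀ d₁, Int.gcd_dvd_right d₀ d₁⟩
    have : Int.gcd d₀ d₁ ≠ 0 := by
      intro h0
      exact hd₀pos.ne' (Int.gcd_eq_zero_iff.mp h0).1
    omega
  obtain ⟨a₁, ha₁'⟩ := hgd0
  obtain ⟨a₂, ha₂'⟩ := hgd1
  have ha₁pos : 0 < a₁ := by nlinarith
  have ha₂pos : 0 < a₂ := by nlinarith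
  have hunit : a₁ * U + a₂ * V = 1 := by
    have h1 : g * (a₁ * U + a₂ * V) = g * 1 := by
      linear_combination (-1 : ℤ) * hBez + (-U) * ha₁' + (-V) * ha₂'
    exact mul_left_cancel₀ hgpos.ne' h1
  have hlpos : 0 < d₀ * a₂ := by positivity
  have hgl : g ∣ d₀ * a₂ := (Dvd.intro a₁ ha₁'.symm).mul_right a₂
  -- new basis
  set C0 : Fin 2 → ℤ := a₁ • w 0 + a₂ • w 1 with hC0
  set C1 : Fin 2 → ℤ := (-V) • w 0 + U • w 1 with hC1
  have wli : ∀ s t : ℤ, s • w 0 + t • w 1 = 0 → s = 0 ∧ t = 0 := by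
    have h2 : LinearIndependent ℤ ![w 0, w 1] := by
      have h3 : ![w 0, w 1] = ⇑w := by
        funext i; fin_cases i <;> rfl
      rw [h3]; exact w.linearIndependent
    exact fun s t => LinearIndependent.pair_iff.mp h2 s t
  have hCli : LinearIndependent ℤ ![C0, C1] := by
    rw [LinearIndependent.pair_iff]
    intro s t hst
    have hexp : (s * a₁ - t * V) • w 0 + (s * a₂ + t * U) • w 1 = 0 := by
      rw [← hst, hC0, hC1]; module
    obtain ⟨e1, e2⟩ := wli _ _ hexp
    constructor
    · linear_combination U * e1 + V * e2 - s * hunit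
    · linear_combination (-a₂) * e1 + a₁ * e2 - t * hunit
  have hw0mem : w 0 ∈ span ℤ {C0, C1} := by
    rw [Submodule.mem_span_pair]
    refine ⟨U, -a₂, ?_⟩
    have h4 : U • C0 + (-a₂) • C1 = (a₁ * U + a₂ * V) • w 0 := by
      rw [hC0, hC1]; module
    rw [h4, hunit, one_smul]
  have hw1mem : w 1 ∈ span ℤ {C0, C1} := by
    rw [Submodule.mem_span_pair]
    refine ⟨V, a₁, ?_⟩
    have h4 : V • C0 + a₁ • C1 = (a₁ * U + a₂ * V) • w 1 := by
      rw [hC0, hC1]; module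
    rw [h4, hunit, one_smul]
  have hCspan : ⊤ ≤ span ℤ (Set.range ![C0, C1]) := by
    have hrange : Set.range ![C0, C1] = {C0, C1} := by
      ext t
      constructor
      · rintro ⟨i, rfl⟩
        fin_cases i
        · exact Set.mem_insert _ _
        · exact Set.mem_insert_of_mem _ rfl
      · intro ht
        rcases Set.mem_insert_iff.mp ht with rfl | ht
        · exact ⟨0, rfl⟩
        · rw [Set.mem_singleton_iff] at ht
          subst ht
          exact ⟨1, rfl⟩
    rw [hrange, ← w.span_eq]
    apply span_le.mpr
    rintro t ⟨i, rfl⟩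
    fin_cases i
    · exact hw0mem
    · exact hw1mem
  set φ : Module.Basis (Fin 2) ℤ (Fin 2 → ℤ) := Module.Basis.mk hCli hCspan with hφ
  refine ⟨φ, g, d₀ * a₂, hgpos, hlpos, hgl, ?_⟩
  have hφ0 : φ 0 = C0 := by rw [hφ]; exact Module.Basis.mk_apply _ _ 0
  have hφ1 : φ 1 = C1 := by rw [hφ]; exact Module.Basis.mk_apply _ _ 1
  rw [hφ0, hφ1, hHspan2]
  -- span equality
  have hgcmem : g • C0 ∈ span ℤ {d₀ • w 0, d₁ • w 1} := by
    rw [Submodule.mem_span_pair]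
    refine ⟨1, 1, ?_⟩
    rw [hC0]
    match_scalars
    · linear_combination ha₁'
    · linear_combination ha₂'
  have hlcmem : (d₀ * a₂) • C1 ∈ span ℤ {d₀ • w 0, d₁ • w 1} := by
    rw [Submodule.mem_span_pair]
    refine ⟨-(V * a₂), U * a₁, ?_⟩
    rw [hC1]
    match_scalars
    · ring
    · simp only [ha₁', ha₂']; ring
  have hpmem : d₀ • w 0 ∈ span ℤ {g • C0, (d₀ * a₂) • C1} := by
    rw [Submodule.mem_span_pair]
    refine ⟨a₁ * U, -1, ?_⟩
    rw [hC0, hC1]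
    match_scalars
    · simp only [ha₁', ha₂']; linear_combination (g * a₁) * hunit
    · simp only [ha₁', ha₂']; ring
  have hqmem : d₁ • w 1 ∈ span ℤ {g • C0, (d₀ * a₂) • C1} := by
    have hqe : d₁ • w 1 = g • C0 - d₀ • w 0 := by
      rw [hC0]
      match_scalars
      · linear_combination ha₂'
      · linear_combination ha₁'
    rw [hqe]
    exact sub_mem (subset_span (Set.mem_insert _ _)) hpmem
  apply le_antisymm
  · apply span_le.mpr
    rintro t ht
    simp only [Set.mem_insert_iff, Set.mem_singleton_iff] at ht
    rcases ht with rfl | rfl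
    · exact hpmem
    · exact hqmem
  · apply span_le.mpr
    rintro t ht
    simp only [Set.mem_insert_iff, Set.mem_singleton_iff] at ht
    rcases ht with rfl | rfl
    · exact hgcmem
    · exact hlcmem


set_option maxHeartbeats 1600000 in
/-- **Lemma (special_basis_for_L).** Let `L` be a lattice of signature `(2,n)` and
`E ⊂ L` a primitive totally isotropic sublattice of rank `2`, with orthogonal
complement `E^⊥`.  There is a `ℤ`-basis `e'_1,…,e'_{n+2}` of `L` and positive
integers `δ`, `e` such that `e'_1,e'_2` is a basis of `E`, `e'_1,…,e'_n` is a basis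
of `E^⊥`, and the Gram matrix has block form `[[0,0,A],[0,B,C],[Aᵀ,Cᵀ,D]]` with
`A = diag(δ, δe)`. -/
theorem stmt_7 (n : ℕ) (G : Matrix (Fin (n + 2)) (Fin (n + 2)) ℤ)
    (hsym : G.IsSymm) (hdet : G.det ≠ 0) (hsig : HasSignature G 2 n)
    (E : Submodule ℤ (Fin (n + 2) → ℤ))
    (hprim : ∀ (x : Fin (n + 2) → ℤ) (c : ℤ), c ≠ 0 → c • x ∈ E → x ∈ E)
    (hrank : Module.finrank ℤ ↥E = 2)
    (hisotropic : ∀ x ∈ E, ∀ y ∈ E, bZ G x y = 0) :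
    ∃ (e' : Module.Basis (Fin (n + 2)) ℤ (Fin (n + 2) → ℤ)) (δ e : ℤ),
      0 < δ ∧ 0 < e ∧
      -- `e'_1, e'_2` is a `ℤ`-basis of `E`
      E = Submodule.span ℤ {e' 0, e' 1} ∧
      -- `e'_1, …, e'_n` is a `ℤ`-basis of `E^⊥`
      (∀ x : Fin (n + 2) → ℤ,
        (∀ y ∈ E, bZ G x y = 0) ↔
          x ∈ Submodule.span ℤ (e' '' {i : Fin (n + 2) | (i : ℕ) < n})) ∧
      -- the two top-left blocks of the Gram matrix vanish
      (∀ i j : Fin (n + 2), (i : ℕ) < 2 → (j : ℕ) < n → bZ G (e' i) (e' j) = 0) ∧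
      -- the block `A` is `diag(δ, δe)`
      bZ G (e' 0) (e' ⟨n, by omega⟩) = δ ∧
      bZ G (e' 0) (e' ⟨n + 1, by omega⟩) = 0 ∧
      bZ G (e' 1) (e' ⟨n, by omega⟩) = 0 ∧
      bZ G (e' 1) (e' ⟨n + 1, by omega⟩) = δ * e := by
  classical
  have hsymB : ∀ x y, bZ G x y = bZ G y x := fun x y => bZ_comm hsym x y
  -- a basis of E
  haveI : Module.Finite ℤ ↥E := by
    apply Module.Finite.iff_fg.mpr
    exact IsNoetherian.noetherian E
  haveI : Module.Free ℤ ↥E := Module.free_of_finite_type_torsion_free'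
  set fE : Module.Basis (Fin 2) ℤ ↥E := Module.finBasisOfFinrankEq ℤ ↥E hrank with hfE
  set fv : Fin 2 → (Fin (n + 2) → ℤ) := fun i => (fE i : Fin (n + 2) → ℤ) with hfv
  have hfvE : ∀ i, fv i ∈ E := fun i => (fE i).2
  have hfvli : LinearIndependent ℤ fv :=
    fE.linearIndependent.map' E.subtype (Submodule.ker_subtype E)
  have hfvli2 : LinearIndependent ℤ ![fv 0, fv 1] := by
    have : ![fv 0, fv 1] = fv := by funext i; fin_cases i <;> rfl
    rw [this]; exact hfvli
  have hEspan : E = span ℤ {fv 0, fv 1} := by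
    conv_lhs => rw [← Submodule.map_subtype_top E]
    rw [← fE.span_eq, ← Submodule.span_image]
    congr 1
    ext z
    simp only [Set.mem_image, Set.mem_range, Set.mem_insert_iff, Set.mem_singleton_iff]
    constructor
    · rintro ⟨y, ⟨i, rfl⟩, rfl⟩
      fin_cases i
      · left; rfl
      · right; rfl
    · rintro (rfl | rfl)
      · exact ⟨fE 0, ⟨0, rfl⟩, rfl⟩
      · exact ⟨fE 1, ⟨1, rfl⟩, rfl⟩
  -- the pairing map with E (w.r.t. the initial basis)
  set ψ : (Fin (n + 2) → ℤ) →ₗ[ℤ] (Fin 2 → ℤ) :=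
    LinearMap.pi (fun i => (BL G).flip (fv i)) with hψ
  have hψapp : ∀ x i, ψ x i = bZ G x (fv i) := fun x i => rfl
  -- separation vectors
  obtain ⟨u₀, m₀, hm₀, hu₀0, hu₀1⟩ := separate G hdet hfvli2
  have hfvli2' : LinearIndependent ℤ ![fv 1, fv 0] := by
    rw [LinearIndependent.pair_iff]
    intro s t hst
    have := LinearIndependent.pair_iff.mp hfvli2 t s (by rw [← hst]; abel)
    exact ⟨this.2, this.1⟩
  obtain ⟨u₁, m₁, hm₁, hu₁1, hu₁0⟩ := separate G hdet hfvli2'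
  -- the image H of ψ contains two independent vectors
  have hψu₀ : ψ u₀ = fun i => if i = 0 then m₀ else 0 := by
    funext i
    fin_cases i
    · simpa [hψapp] using hu₀0
    · simpa [hψapp] using hu₀1
  have hψu₁ : ψ u₁ = fun i => if i = 1 then m₁ else 0 := by
    funext i
    fin_cases i
    · simpa [hψapp] using hu₁0
    · simpa [hψapp] using hu₁1
  have hHli : LinearIndependent ℤ ![ψ u₀, ψ u₁] := by
    rw [LinearIndependent.pair_iff]
    intro s t hst
    constructor
    · have := congrFun hst 0
      rw [hψu₀, hψu₁] at this
      simp at this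
      rcases this with h | h
      · exact h
      · exact absurd h hm₀
    · have := congrFun hst 1
      rw [hψu₀, hψu₁] at this
      simp at this
      rcases this with h | h
      · exact h
      · exact absurd h hm₁
  -- Smith normal form of the image
  obtain ⟨cB, g, l, hgpos, hlpos, hgl, hHspan⟩ :=
    snf2 (LinearMap.range ψ) (LinearMap.mem_range_self ψ u₀)
      (LinearMap.mem_range_self ψ u₁) hHli
  -- change of basis coefficients
  set dlt : Fin 2 → (Fin 2 → ℤ) := fun i => (fun j => if i = j then 1 else 0) with hdlt
  set D : Fin 2 → Fin 2 → ℤ := fun j i => cB.repr (dlt i) j with hD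
  set ev2 : Fin 2 → (Fin (n + 2) → ℤ) :=
    fun j => D j 0 • fv 0 + D j 1 • fv 1 with hev2
  have hev2E : ∀ j, ev2 j ∈ E := by
    intro j
    exact add_mem (smul_mem _ _ (hfvE 0)) (smul_mem _ _ (hfvE 1))
  -- key evaluation formula
  have hrepr : ∀ z : Fin 2 → ℤ, ∀ j, cB.repr z j = z 0 * D j 0 + z 1 * D j 1 := by
    intro z j
    have hz : z = z 0 • dlt 0 + z 1 • dlt 1 := by
      funext i; fin_cases i <;> simp [hdlt]
    conv_lhs => rw [hz]
    rw [map_add, map_smul, map_smul]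
    simp [hD, smul_eq_mul]
  have hBev : ∀ x j, bZ G x (ev2 j) = cB.repr (ψ x) j := by
    intro x j
    have h1 : bZ G x (ev2 j) = D j 0 * bZ G x (fv 0) + D j 1 * bZ G x (fv 1) := by
      rw [hev2]
      simp only []
      rw [bZ_add_right, bZ_smul_right, bZ_smul_right]
    rw [h1, hrepr (ψ x) j, hψapp, hψapp]
    ring
  -- membership in H gives divisibility description
  have hval : ∀ x, ∃ s t : ℤ, bZ G x (ev2 0) = s * g ∧ bZ G x (ev2 1) = t * l := by
    intro x
    have hx : ψ x ∈ span ℤ {g • cB 0, l • cB 1} := by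
      rw [← hHspan]; exact LinearMap.mem_range_self ψ x
    obtain ⟨s, t, hst⟩ := Submodule.mem_span_pair.mp hx
    refine ⟨s, t, ?_, ?_⟩
    · rw [hBev, ← hst]
      rw [map_add, map_smul, map_smul, map_smul, map_smul, cB.repr_self, cB.repr_self]
      simp [Finsupp.single_apply]
      try ring
    · rw [hBev, ← hst]
      rw [map_add, map_smul, map_smul, map_smul, map_smul, cB.repr_self, cB.repr_self]
      simp [Finsupp.single_apply]
      try ring
  -- preimages of the diagonal generators
  obtain ⟨uu, huu⟩ : ∃ uu, ψ uu = g • cB 0 := by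
    have : g • cB 0 ∈ LinearMap.range ψ := by
      rw [hHspan]; exact subset_span (Set.mem_insert _ _)
    exact this
  obtain ⟨vv, hvv⟩ : ∃ vv, ψ vv = l • cB 1 := by
    have : l • cB 1 ∈ LinearMap.range ψ := by
      rw [hHspan]; exact subset_span (Set.mem_insert_of_mem _ rfl)
    exact this
  have huu0 : bZ G uu (ev2 0) = g := by
    rw [hBev, huu, map_smul, cB.repr_self]
    simp
  have huu1 : bZ G uu (ev2 1) = 0 := by
    rw [hBev, huu, map_smul, cB.repr_self]
    simp [Finsupp.single_apply]
  have hvv0 : bZ G vv (ev2 0) = 0 := by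
    rw [hBev, hvv, map_smul, cB.repr_self]
    simp [Finsupp.single_apply]
  have hvv1 : bZ G vv (ev2 1) = l := by
    rw [hBev, hvv, map_smul, cB.repr_self]
    simp
  -- independence of the new E-generators
  have hev2li2 : LinearIndependent ℤ ![ev2 0, ev2 1] := by
    rw [LinearIndependent.pair_iff]
    intro s t hst
    have h0 : bZ G uu (s • ev2 0 + t • ev2 1) = s * g := by
      rw [bZ_add_right, bZ_smul_right, bZ_smul_right, huu0, huu1]; ring
    have h2 : bZ G vv (s • ev2 0 + t • ev2 1) = t * l := by
      rw [bZ_add_right, bZ_smul_right, bZ_smul_right, hvv0, hvv1]; ring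
    rw [hst] at h0 h2
    simp only [bZ, Matrix.mulVec_zero, dotProduct_zero] at h0 h2
    constructor
    · rcases mul_eq_zero.mp h0.symm with h | h
      · exact h
      · exact absurd h hgpos.ne'
    · rcases mul_eq_zero.mp h2.symm with h | h
      · exact h
      · exact absurd h hlpos.ne'
  -- E is spanned by the new generators
  have hinv : ∀ i k : Fin 2, cB 0 i * D 0 k + cB 1 i * D 1 k = (if k = i then 1 else 0) := by
    intro i k
    have h1 := cB.sum_repr (dlt k)
    have h2 := congrFun h1 i
    rw [Fin.sum_univ_two] at h2
    simp only [Pi.add_apply, Pi.smul_apply, smul_eq_mul] at h2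
    rw [hdlt] at h2
    simp only at h2
    rw [← h2, hD]
    ring
  have h00 : cB 0 0 * D 0 0 + cB 1 0 * D 1 0 = 1 := by simpa using hinv 0 0
  have h01 : cB 0 0 * D 0 1 + cB 1 0 * D 1 1 = 0 := by simpa using hinv 0 1
  have h10 : cB 0 1 * D 0 0 + cB 1 1 * D 1 0 = 0 := by simpa using hinv 1 0
  have h11 : cB 0 1 * D 0 1 + cB 1 1 * D 1 1 = 1 := by simpa using hinv 1 1
  have hfvmem0 : fv 0 ∈ span ℤ {ev2 0, ev2 1} := by
    rw [Submodule.mem_span_pair]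
    refine ⟨cB 0 0, cB 1 0, ?_⟩
    rw [hev2]
    match_scalars
    · linear_combination h00
    · linear_combination h01
  have hfvmem1 : fv 1 ∈ span ℤ {ev2 0, ev2 1} := by
    rw [Submodule.mem_span_pair]
    refine ⟨cB 0 1, cB 1 1, ?_⟩
    rw [hev2]
    match_scalars
    · linear_combination h10
    · linear_combination h11
  have hEspan2 : E = span ℤ {ev2 0, ev2 1} := by
    apply le_antisymm
    · rw [hEspan]
      apply span_le.mpr
      rintro z hz
      rcases Set.mem_insert_iff.mp hz with rfl | hz
      · exact hfvmem0
      · rw [Set.mem_singleton_iff] at hz; subst hz; exact hfvmem1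
    · apply span_le.mpr
      rintro z hz
      rcases Set.mem_insert_iff.mp hz with rfl | hz
      · exact hev2E 0
      · rw [Set.mem_singleton_iff] at hz; subst hz; exact hev2E 1
  -- the orthogonal complement K
  set ψ' : (Fin (n + 2) → ℤ) →ₗ[ℤ] (Fin 2 → ℤ) :=
    LinearMap.pi (fun i => (BL G).flip (ev2 i)) with hψ'
  have hψ'app : ∀ x i, ψ' x i = bZ G x (ev2 i) := fun x i => rfl
  set K : Submodule ℤ (Fin (n + 2) → ℤ) := LinearMap.ker ψ' with hKdef
  have hKmem : ∀ x, x ∈ K ↔ (bZ G x (ev2 0) = 0 ∧ bZ G x (ev2 1) = 0) := by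
    intro x
    rw [hKdef, LinearMap.mem_ker]
    constructor
    · intro h
      exact ⟨congrFun h 0, congrFun h 1⟩
    · intro ⟨h1, h2⟩
      funext i
      fin_cases i
      · exact h1
      · exact h2
  have hEK : E ≤ K := by
    intro z hz
    rw [hKmem]
    exact ⟨hisotropic z hz _ (hev2E 0), hisotropic z hz _ (hev2E 1)⟩
  have hKiff : ∀ x, (x ∈ K ↔ ∀ y ∈ E, bZ G x y = 0) := by
    intro x
    constructor
    · intro hx y hy
      rw [hEspan2] at hy
      obtain ⟨a, b, hab⟩ := Submodule.mem_span_pair.mp hy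
      obtain ⟨hx0, hx1⟩ := (hKmem x).mp hx
      rw [← hab, bZ_add_right, bZ_smul_right, bZ_smul_right, hx0, hx1]; ring
    · intro h
      rw [hKmem]
      exact ⟨h _ (hev2E 0), h _ (hev2E 1)⟩
  -- the submodule E inside K, and the quotient
  set EK : Submodule ℤ ↥K := E.comap K.subtype with hEKdef
  have hEKmap : Submodule.map K.subtype EK = E := by
    rw [hEKdef, Submodule.map_comap_subtype]
    exact inf_of_le_right hEK
  haveI : Module.Finite ℤ ↥K := by
    apply Module.Finite.iff_fg.mpr
    exact IsNoetherian.noetherian K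
  haveI : NoZeroSMulDivisors ℤ (↥K ⧸ EK) := by
    refine ⟨fun {c} {q} hcq => ?_⟩
    by_cases hc : c = 0
    · exact Or.inl hc
    · right
      obtain ⟨z, rfl⟩ := Submodule.Quotient.mk_surjective EK q
      rw [← Submodule.Quotient.mk_smul, Submodule.Quotient.mk_eq_zero] at hcq
      have hzE : (z : Fin (n + 2) → ℤ) ∈ E := by
        apply hprim _ c hc
        have h5 : ((c • z : ↥K) : Fin (n + 2) → ℤ) ∈ E := hcq
        simpa using h5
      rw [Submodule.Quotient.mk_eq_zero]
      exact hzE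
  haveI : Module.Finite ℤ (↥K ⧸ EK) :=
    Module.Finite.of_surjective EK.mkQ (Submodule.mkQ_surjective EK)
  haveI : Module.Free ℤ (↥K ⧸ EK) := Module.free_of_finite_type_torsion_free'
  set m : ℕ := Fintype.card (Module.Free.ChooseBasisIndex ℤ (↥K ⧸ EK)) with hm
  set qB : Module.Basis (Fin m) ℤ (↥K ⧸ EK) :=
    (Module.Free.chooseBasis ℤ (↥K ⧸ EK)).reindex (Fintype.equivFin _) with hqB
  have hlift : ∀ j : Fin m, ∃ z : ↥K, EK.mkQ z = qB j := by
    intro j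
    obtain ⟨z, hz⟩ := Submodule.Quotient.mk_surjective EK (qB j)
    exact ⟨z, hz⟩
  choose wK hwK using hlift
  set eK : Fin 2 → ↥K := fun i => ⟨ev2 i, hEK (hev2E i)⟩ with heK
  -- first stacking: a basis family of K
  have heKli : LinearIndependent ℤ eK := by
    apply LinearIndependent.of_comp K.subtype
    have h6 : ⇑K.subtype ∘ eK = fun i : Fin 2 => ev2 i := rfl
    rw [h6]
    have h7 : (fun i : Fin 2 => ev2 i) = ![ev2 0, ev2 1] := by
      funext i; fin_cases i <;> rfl
    rw [h7]
    exact hev2li2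
  have heKspan : span ℤ (Set.range eK) = LinearMap.ker EK.mkQ := by
    rw [Submodule.ker_mkQ]
    refine Submodule.map_injective_of_injective
      (show Function.Injective ⇑K.subtype from Subtype.coe_injective) ?_
    rw [Submodule.map_span, hEKmap]
    have h8 : ⇑K.subtype '' Set.range eK = {ev2 0, ev2 1} := by
      ext z
      constructor
      · rintro ⟨y, ⟨i, rfl⟩, rfl⟩
        fin_cases i
        · exact Set.mem_insert _ _
        · exact Set.mem_insert_of_mem _ rfl
      · intro hz
        rcases Set.mem_insert_iff.mp hz with rfl | hz
        · exact ⟨eK 0, ⟨0, rfl⟩, rfl⟩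
        · rw [Set.mem_singleton_iff] at hz
          subst hz
          exact ⟨eK 1, ⟨1, rfl⟩, rfl⟩
    rw [h8]
    exact hEspan2.symm
  have hwKli : LinearIndependent ℤ (⇑EK.mkQ ∘ wK) := by
    have h9 : ⇑EK.mkQ ∘ wK = ⇑qB := funext hwK
    rw [h9]
    exact qB.linearIndependent
  have hwKs : ∀ z, EK.mkQ z ∈ span ℤ (Set.range (⇑EK.mkQ ∘ wK)) := by
    intro z
    have h9 : ⇑EK.mkQ ∘ wK = ⇑qB := funext hwK
    rw [h9, qB.span_eq]
    trivial
  obtain ⟨hsKli, hsKspan⟩ := stack EK.mkQ eK wK heKli heKspan hwKli hwKs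
  set sK : Fin 2 ⊕ Fin m → ↥K := Sum.elim eK wK with hsK
  -- second stacking: a basis family of the whole space
  set kv : Fin 2 ⊕ Fin m → (Fin (n + 2) → ℤ) := fun s => ((sK s : ↥K) : Fin (n + 2) → ℤ)
    with hkv
  have hkvli : LinearIndependent ℤ kv :=
    hsKli.map' K.subtype (Submodule.ker_subtype K)
  have hkvspan : span ℤ (Set.range kv) = K := by
    have h10 : kv = ⇑K.subtype ∘ sK := rfl
    rw [h10, Set.range_comp, Submodule.span_image, hsKspan, Submodule.map_subtype_top]
  have e0 : ψ' uu 0 = g := huu0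
  have e1 : ψ' uu 1 = 0 := huu1
  have f0 : ψ' vv 0 = 0 := hvv0
  have f1 : ψ' vv 1 = l := hvv1
  have hwMli : LinearIndependent ℤ (⇑ψ' ∘ ![uu, vv]) := by
    have hcomp : ⇑ψ' ∘ ![uu, vv] = ![ψ' uu, ψ' vv] := by
      funext i; fin_cases i <;> rfl
    rw [hcomp, LinearIndependent.pair_iff]
    intro s t hst
    have h0 := congrFun hst 0
    have h1 := congrFun hst 1
    simp only [Pi.add_apply, Pi.smul_apply, smul_eq_mul, Pi.zero_apply, e0, e1, f0, f1] at h0 h1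
    constructor
    · rcases mul_eq_zero.mp (by linarith : s * g = 0) with h | h
      · exact h
      · exact absurd h hgpos.ne'
    · rcases mul_eq_zero.mp (by linarith : t * l = 0) with h | h
      · exact h
      · exact absurd h hlpos.ne'
  have hwMs : ∀ x, ψ' x ∈ span ℤ (Set.range (⇑ψ' ∘ ![uu, vv])) := by
    intro x
    obtain ⟨s, t, hs, ht⟩ := hval x
    have hx : ψ' x = s • ψ' uu + t • ψ' vv := by
      have c0 : ψ' x 0 = (s • ψ' uu + t • ψ' vv) 0 := by
        have hrhs : (s • ψ' uu + t • ψ' vv) 0 = s * ψ' uu 0 + t * ψ' vv 0 := rfl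
        rw [hrhs, e0, f0, show ψ' x 0 = bZ G x (ev2 0) from rfl, hs]
        ring
      have c1 : ψ' x 1 = (s • ψ' uu + t • ψ' vv) 1 := by
        have hrhs : (s • ψ' uu + t • ψ' vv) 1 = s * ψ' uu 1 + t * ψ' vv 1 := rfl
        rw [hrhs, e1, f1, show ψ' x 1 = bZ G x (ev2 1) from rfl, ht]
        ring
      funext i
      fin_cases i
      · exact c0
      · exact c1
    rw [hx]
    exact add_mem (smul_mem _ _ (subset_span ⟨0, rfl⟩)) (smul_mem _ _ (subset_span ⟨1, rfl⟩))
  obtain ⟨hFli, hFspan⟩ := stack ψ' kv ![uu, vv] hkvli (by rw [hkvspan]) hwMli hwMs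
  set bFull : Module.Basis ((Fin 2 ⊕ Fin m) ⊕ Fin 2) ℤ (Fin (n + 2) → ℤ) :=
    Module.Basis.mk hFli hFspan.ge with hbFull
  -- cardinality bookkeeping
  have hcard : 2 + m + 2 = n + 2 := by
    have h1 := Module.finrank_eq_card_basis (Pi.basisFun ℤ (Fin (n + 2)))
    have h2 := Module.finrank_eq_card_basis bFull
    rw [h1] at h2
    simp [Fintype.card_sum] at h2
    omega
  have hnm : n = 2 + m := by omega
  set eIdx : ((Fin 2 ⊕ Fin m) ⊕ Fin 2) ≃ Fin (n + 2) :=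
    ((Equiv.sumCongr finSumFinEquiv (Equiv.refl (Fin 2))).trans finSumFinEquiv).trans
      (finCongr hcard) with heIdx
  have hIdxA : ∀ i : Fin 2, ((eIdx (Sum.inl (Sum.inl i))) : ℕ) = (i : ℕ) := by
    intro i
    simp [heIdx, finSumFinEquiv_apply_left]
    try omega
  have hIdxB : ∀ j : Fin m, ((eIdx (Sum.inl (Sum.inr j))) : ℕ) = 2 + (j : ℕ) := by
    intro j
    simp [heIdx, finSumFinEquiv_apply_left, finSumFinEquiv_apply_right]
    try omega
  have hIdxC : ∀ k : Fin 2, ((eIdx (Sum.inr k)) : ℕ) = 2 + m + (k : ℕ) := by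
    intro k
    simp [heIdx, finSumFinEquiv_apply_right]
    try omega
  set e' : Module.Basis (Fin (n + 2)) ℤ (Fin (n + 2) → ℤ) := bFull.reindex eIdx with he'
  have hEeval : ∀ idx, e' (eIdx idx) = Sum.elim kv ![uu, vv] idx := by
    intro idx
    rw [he', Module.Basis.reindex_apply, Equiv.symm_apply_apply, hbFull, Module.Basis.mk_apply]
  -- the image description of the first n basis vectors
  have hImg : e' '' {i : Fin (n + 2) | (i : ℕ) < n} = Set.range kv := by
    ext x
    constructor
    · rintro ⟨i, hi, rfl⟩
      obtain ⟨idx, rfl⟩ : ∃ idx, eIdx idx = i := ⟨eIdx.symm i, by simp⟩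
      rcases idx with (s | k)
      · rw [hEeval]
        exact ⟨s, rfl⟩
      · exfalso
        have hvk := hIdxC k
        simp only [Set.mem_setOf_eq] at hi
        omega
    · rintro ⟨s, rfl⟩
      refine ⟨eIdx (Sum.inl s), ?_, ?_⟩
      · simp only [Set.mem_setOf_eq]
        rcases s with (i | j)
        · have h11 := hIdxA i
          have h12 := i.isLt
          omega
        · have h11 := hIdxB j
          have h12 := j.isLt
          omega
      · rw [hEeval]
        rfl
  have hKspan : span ℤ (e' '' {i : Fin (n + 2) | (i : ℕ) < n}) = K := by
    rw [hImg, hkvspan]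
  -- identification of the distinguished basis vectors
  have he'0 : e' 0 = ev2 0 := by
    have h13 : (0 : Fin (n + 2)) = eIdx (Sum.inl (Sum.inl 0)) := by
      apply Fin.ext
      rw [hIdxA]
      rfl
    rw [h13, hEeval]
    rfl
  have he'1 : e' 1 = ev2 1 := by
    have h13 : (1 : Fin (n + 2)) = eIdx (Sum.inl (Sum.inl 1)) := by
      apply Fin.ext
      rw [hIdxA]
      rfl
    rw [h13, hEeval]
    rfl
  have he'n : e' ⟨n, by omega⟩ = uu := by
    have h13 : (⟨n, by omega⟩ : Fin (n + 2)) = eIdx (Sum.inr 0) := by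
      apply Fin.ext
      rw [hIdxC]
      simp [hnm]
    rw [h13, hEeval]
    rfl
  have he'n1 : e' ⟨n + 1, by omega⟩ = vv := by
    have h13 : (⟨n + 1, by omega⟩ : Fin (n + 2)) = eIdx (Sum.inr 1) := by
      apply Fin.ext
      rw [hIdxC]
      simp [hnm]
    rw [h13, hEeval]
    rfl
  -- conclusion
  have hle : g * (l / g) = l := Int.mul_ediv_cancel' hgl
  have hepos : 0 < l / g := by nlinarith
  refine ⟨e', g, l / g, hgpos, hepos, ?_, ?_, ?_, ?_, ?_, ?_, ?_⟩
  · rw [he'0, he'1]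
    exact hEspan2
  · intro x
    rw [show span ℤ (e' '' {i : Fin (n + 2) | (i : ℕ) < n}) = K from hKspan]
    exact (hKiff x).symm
  · intro i j hi hj
    have hjK : e' j ∈ K := by
      have h14 : e' j ∈ Set.range kv := by
        rw [← hImg]
        exact ⟨j, hj, rfl⟩
      obtain ⟨s, hs⟩ := h14
      rw [← hs]
      exact (sK s).2
    have hiE : e' i = ev2 ⟨(i : ℕ), hi⟩ := by
      have h13 : i = eIdx (Sum.inl (Sum.inl ⟨(i : ℕ), hi⟩)) := by
        apply Fin.ext
        rw [hIdxA]
      conv_lhs => rw [h13, hEeval]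
      rfl
    rw [hsymB, hiE]
    obtain ⟨hK0, hK1⟩ := (hKmem (e' j)).mp hjK
    have h15 : (i : ℕ) = 0 ∨ (i : ℕ) = 1 := by omega
    rcases h15 with h15 | h15
    · have : (⟨(i : ℕ), hi⟩ : Fin 2) = 0 := by apply Fin.ext; simp [h15]
      rw [this]
      exact hK0
    · have : (⟨(i : ℕ), hi⟩ : Fin 2) = 1 := by apply Fin.ext; simp [h15]
      rw [this]
      exact hK1
  · rw [he'0, he'n, hsymB, huu0]
  · rw [he'0, he'n1, hsymB, hvv0]
  · rw [he'1, he'n, hsymB, huu1]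
  · rw [he'1, he'n1, hsymB, hvv1]
    exact hle.symm

end A0607339
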